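/- arXiv:2005.09408 — 7 statements merged into one kernel-verified Lean document; each statement's English description precedes it below -/
import Mathlib

section
/- Let M ∈ ℝ^{n×n} satisfy zᵀMz ≥ 0 for all z ∈ ℝⁿ, let q ∈ ℝⁿ, let S ⊆ ℝⁿ, and let F(x) = Mx + q. If x and y are both solutions of VI(S, F), then (M + Mᵀ)x = (M + Mᵀ)y. In particular, there exists c ∈ ℝⁿ such that every solution x of VI(S, F) satisfies (M + Mᵀ)x = c. -/
open Matrix

lemma quad_zero_aux (a b : ℝ) (hb : 0 ≤ b) (ha : 0 ≤ a)
    (h : ∀ t : ℝ, 0 ≤ t * a + t ^ 2 * b) : a = 0 := by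
  have hb1 : 0 < b + 1 := by linarith
  have ht := h (-a / (b + 1))
  rw [div_mul_eq_mul_div, div_pow, div_mul_eq_mul_div] at ht
  have key : -a * a / (b + 1) + (-a) ^ 2 * b / (b + 1) ^ 2
      = -(a ^ 2 / (b + 1) ^ 2) := by
    field_simp
    ring
  rw [key, le_neg, neg_zero] at ht
  have : a ^ 2 ≤ 0 := by
    by_contra hcon
    push_neg at hcon
    have := div_pos hcon (pow_pos hb1 2)
    linarith
  nlinarith [sq_nonneg a]

lemma psd_kernel (n : ℕ) (M : Matrix (Fin n) (Fin n) ℝ)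
    (hpsd : ∀ z : Fin n → ℝ, 0 ≤ z ⬝ᵥ M.mulVec z)
    (d : Fin n → ℝ) (hd : d ⬝ᵥ M.mulVec d = 0) :
    (M + Mᵀ).mulVec d = 0 := by
  set w := (M + Mᵀ).mulVec d with hw
  have hlin : w ⬝ᵥ w = d ⬝ᵥ M.mulVec w + w ⬝ᵥ M.mulVec d := by
    nth_rewrite 2 [hw]
    rw [add_mulVec, mulVec_transpose, dotProduct_add,
      dotProduct_comm w (d ᵥ* M), ← dotProduct_mulVec]
    ring
  have key : ∀ t : ℝ, 0 ≤ t * (w ⬝ᵥ w) + t ^ 2 * (w ⬝ᵥ M.mulVec w) := by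
    intro t
    have h0 := hpsd (d + t • w)
    simp only [mulVec_add, mulVec_smul, dotProduct_add, add_dotProduct,
      dotProduct_smul, smul_dotProduct, smul_eq_mul, hd] at h0
    have h1 : t * (w ⬝ᵥ w) + t ^ 2 * (w ⬝ᵥ M.mulVec w)
        = 0 + t * (w ⬝ᵥ M.mulVec d) + t * (d ⬝ᵥ M.mulVec w + t * (w ⬝ᵥ M.mulVec w)) := by
      rw [hlin]; ring
    rw [h1]; exact h0
  have hnn : 0 ≤ w ⬝ᵥ w := by
    unfold dotProduct
    exact Finset.sum_nonneg fun i _ => mul_self_nonneg _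
  have ha : w ⬝ᵥ w = 0 := quad_zero_aux _ _ (hpsd w) hnn key
  exact dotProduct_self_eq_zero.mp ha

/-- If `zᵀMz ≥ 0` for all `z` and `x, y` are both solutions of `VI(S, F)` with
`F x = M x + q`, then `(M + Mᵀ)x = (M + Mᵀ)y`; in particular there exists `c`
such that every solution `x` satisfies `(M + Mᵀ)x = c`. -/
theorem VI_solutions_common_c (n : ℕ) (M : Matrix (Fin n) (Fin n) ℝ)
    (q : Fin n → ℝ) (S : Set (Fin n → ℝ))
    (hpsd : ∀ z : Fin n → ℝ, 0 ≤ z ⬝ᵥ M.mulVec z) :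
    (∀ x y : Fin n → ℝ,
        (x ∈ S ∧ ∀ z ∈ S, 0 ≤ (z - x) ⬝ᵥ (M.mulVec x + q)) →
        (y ∈ S ∧ ∀ z ∈ S, 0 ≤ (z - y) ⬝ᵥ (M.mulVec y + q)) →
        (M + Mᵀ).mulVec x = (M + Mᵀ).mulVec y) ∧
    (∃ c : Fin n → ℝ, ∀ x : Fin n → ℝ,
        (x ∈ S ∧ ∀ z ∈ S, 0 ≤ (z - x) ⬝ᵥ (M.mulVec x + q)) →
        (M + Mᵀ).mulVec x = c) := by
  have main : ∀ x y : Fin n → ℝ,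
      (x ∈ S ∧ ∀ z ∈ S, 0 ≤ (z - x) ⬝ᵥ (M.mulVec x + q)) →
      (y ∈ S ∧ ∀ z ∈ S, 0 ≤ (z - y) ⬝ᵥ (M.mulVec y + q)) →
      (M + Mᵀ).mulVec x = (M + Mᵀ).mulVec y := by
    intro x y hx hy
    have h1 := hx.2 y hy.1
    have h2 := hy.2 x hx.1
    have hd0 : (x - y) ⬝ᵥ M.mulVec (x - y) = 0 := by
      have hle : (x - y) ⬝ᵥ M.mulVec (x - y) ≤ 0 := by
        have e1 : (y - x) ⬝ᵥ (M.mulVec x + q) + (x - y) ⬝ᵥ (M.mulVec y + q)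
            = -((x - y) ⬝ᵥ M.mulVec (x - y)) := by
          simp only [mulVec_sub, dotProduct_sub, sub_dotProduct, dotProduct_add]
          ring
        linarith [h1, h2]
      linarith [hpsd (x - y)]
    have := psd_kernel n M hpsd (x - y) hd0
    rw [mulVec_sub] at this
    have := sub_eq_zero.mp this
    exact this
  refine ⟨main, ?_⟩
  by_cases h : ∃ x : Fin n → ℝ,
      x ∈ S ∧ ∀ z ∈ S, 0 ≤ (z - x) ⬝ᵥ (M.mulVec x + q)
  · obtain ⟨x₀, hx₀⟩ := h
    exact ⟨(M + Mᵀ).mulVec x₀, fun x hx => main x x₀ hx hx₀⟩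
  · exact ⟨0, fun x hx => absurd ⟨x, hx⟩ h⟩
end

section
/- Let M ∈ ℝ^{n×n} satisfy zᵀMz ≥ 0 for all z ∈ ℝⁿ, let q ∈ ℝⁿ, let S ⊆ ℝⁿ, and let F(x) = Mx + q. If x and y are both solutions of VI(S, F), then xᵀMx = yᵀMy. In particular, there exists a constant d ≥ 0 such that every solution x of VI(S, F) satisfies xᵀMx = d. -/
open Matrix

private lemma key_c_eq_zero {c d : ℝ} (hd : 0 ≤ d) (h : ∀ t : ℝ, 0 ≤ t * c + t ^ 2 * d) :
    c = 0 := by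
  rcases eq_or_lt_of_le hd with hd0 | hdpos
  · have h1 := h 1
    have h2 := h (-1)
    nlinarith
  · have h' := h (-c / (2 * d))
    have e : -c / (2 * d) * c + (-c / (2 * d)) ^ 2 * d = -c ^ 2 / (4 * d) := by
      field_simp
      ring
    rw [e] at h'
    have h4 : (0:ℝ) < 4 * d := by linarith
    have h2 := mul_nonneg h' h4.le
    rw [div_mul_cancel₀ _ (ne_of_gt h4)] at h2
    nlinarith [sq_nonneg c]

private lemma VI_aux (n : ℕ) (M : Matrix (Fin n) (Fin n) ℝ)
    (q : Fin n → ℝ) (S : Set (Fin n → ℝ))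
    (hpsd : ∀ z : Fin n → ℝ, 0 ≤ z ⬝ᵥ M.mulVec z)
    (x y : Fin n → ℝ)
    (hx : x ∈ S ∧ ∀ z ∈ S, 0 ≤ (z - x) ⬝ᵥ (M.mulVec x + q))
    (hy : y ∈ S ∧ ∀ z ∈ S, 0 ≤ (z - y) ⬝ᵥ (M.mulVec y + q)) :
    x ⬝ᵥ M.mulVec x = y ⬝ᵥ M.mulVec y := by
  set z := y - x with hzdef
  have ha := hx.2 y hy.1
  have hb := hy.2 x hx.1
  have expand : (y - x) ⬝ᵥ (M.mulVec x + q) + (x - y) ⬝ᵥ (M.mulVec y + q)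
      = -(z ⬝ᵥ M.mulVec z) := by
    simp only [hzdef, sub_dotProduct, dotProduct_add, dotProduct_sub, mulVec_sub]
    ring
  have hzle : z ⬝ᵥ M.mulVec z ≤ 0 := by linarith
  have hz0 : z ⬝ᵥ M.mulVec z = 0 := le_antisymm hzle (hpsd z)
  -- symmetric part kills z
  have hker : ∀ w : Fin n → ℝ, z ⬝ᵥ M.mulVec w + w ⬝ᵥ M.mulVec z = 0 := by
    intro w
    apply key_c_eq_zero (hpsd w)
    intro t
    have h := hpsd (z + t • w)
    have : (z + t • w) ⬝ᵥ M.mulVec (z + t • w)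
        = z ⬝ᵥ M.mulVec z + t * (z ⬝ᵥ M.mulVec w + w ⬝ᵥ M.mulVec z)
          + t ^ 2 * (w ⬝ᵥ M.mulVec w) := by
      simp only [mulVec_add, mulVec_smul, dotProduct_add, add_dotProduct,
        dotProduct_smul, smul_dotProduct, smul_eq_mul]
      ring
    rw [this, hz0] at h
    linarith
  have hxz := hker x
  have hyy : y ⬝ᵥ M.mulVec y
      = x ⬝ᵥ M.mulVec x + (z ⬝ᵥ M.mulVec x + x ⬝ᵥ M.mulVec z) + z ⬝ᵥ M.mulVec z := by
    have : y = x + z := by simp [hzdef]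
    rw [this]
    simp only [mulVec_add, dotProduct_add, add_dotProduct]
    ring
  rw [hyy, hxz, hz0]
  ring

/-- If `zᵀMz ≥ 0` for all `z` and `x, y` are both solutions of `VI(S, F)` with
`F x = M x + q`, then `xᵀMx = yᵀMy`; in particular there exists a constant
`d ≥ 0` such that every solution `x` satisfies `xᵀMx = d`. -/
theorem VI_solutions_common_d (n : ℕ) (M : Matrix (Fin n) (Fin n) ℝ)
    (q : Fin n → ℝ) (S : Set (Fin n → ℝ))
    (hpsd : ∀ z : Fin n → ℝ, 0 ≤ z ⬝ᵥ M.mulVec z) :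
    (∀ x y : Fin n → ℝ,
        (x ∈ S ∧ ∀ z ∈ S, 0 ≤ (z - x) ⬝ᵥ (M.mulVec x + q)) →
        (y ∈ S ∧ ∀ z ∈ S, 0 ≤ (z - y) ⬝ᵥ (M.mulVec y + q)) →
        x ⬝ᵥ M.mulVec x = y ⬝ᵥ M.mulVec y) ∧
    (∃ d : ℝ, 0 ≤ d ∧ ∀ x : Fin n → ℝ,
        (x ∈ S ∧ ∀ z ∈ S, 0 ≤ (z - x) ⬝ᵥ (M.mulVec x + q)) →
        x ⬝ᵥ M.mulVec x = d) := by
  refine ⟨VI_aux n M q S hpsd, ?_⟩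
  by_cases h : ∃ x : Fin n → ℝ,
      x ∈ S ∧ ∀ z ∈ S, 0 ≤ (z - x) ⬝ᵥ (M.mulVec x + q)
  · obtain ⟨x₀, hx₀⟩ := h
    exact ⟨x₀ ⬝ᵥ M.mulVec x₀, hpsd x₀,
      fun x hx => VI_aux n M q S hpsd x x₀ hx hx₀⟩
  · exact ⟨0, le_refl 0, fun x hx => absurd ⟨x, hx⟩ h⟩
end

section
/- Let M ∈ ℝ^{n×n} satisfy zᵀMz ≥ 0 for all z ∈ ℝⁿ, let q ∈ ℝⁿ, let S ⊆ ℝⁿ be convex, and let F(x) = Mx + q. Suppose x₀ is a solution of VI(S, F), and set c := (M + Mᵀ)x₀ and d := x₀ᵀMx₀. Then the solution set of VI(S, F) equals { x ∈ S : (M + Mᵀ)x = c and yᵀ(Mx + q) ≥ d + qᵀx for all y ∈ S }. -/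
open Matrix

lemma sym_psd_kernel {n : ℕ} (A : Matrix (Fin n) (Fin n) ℝ)
    (hsymm : ∀ u v : Fin n → ℝ, u ⬝ᵥ A.mulVec v = v ⬝ᵥ A.mulVec u)
    (hpsd : ∀ z : Fin n → ℝ, 0 ≤ z ⬝ᵥ A.mulVec z) (z : Fin n → ℝ)
    (hz : z ⬝ᵥ A.mulVec z = 0) : A.mulVec z = 0 := by
  set v := A.mulVec z with hv
  have hb : 0 ≤ v ⬝ᵥ v := by
    simpa [dotProduct] using Finset.sum_nonneg fun i _ => mul_self_nonneg (v i)
  rcases eq_or_lt_of_le hb with h | h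
  · exact dotProduct_self_eq_zero.mp h.symm
  · exfalso
    set a := v ⬝ᵥ A.mulVec v with hav
    have ha : 0 ≤ a := hpsd v
    set ε : ℝ := (v ⬝ᵥ v) / (a + 1) with hε
    have hεpos : 0 < ε := div_pos h (by linarith)
    have key : 0 ≤ (z - ε • v) ⬝ᵥ A.mulVec (z - ε • v) := hpsd _
    have hzv : z ⬝ᵥ A.mulVec v = v ⬝ᵥ v := by
      rw [hsymm z v, ← hv]
    have hvz : v ⬝ᵥ A.mulVec z = v ⬝ᵥ v := by rw [← hv]
    simp only [Matrix.mulVec_sub, Matrix.mulVec_smul, sub_dotProduct, dotProduct_sub,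
      smul_dotProduct, dotProduct_smul, smul_eq_mul, hz, hzv, hvz, ← hav] at key
    -- key : 0 ≤ 0 - ε * (v⬝v) - (ε * (v⬝v) - ε * (ε * a))
    have hεa : ε * (a + 1) = v ⬝ᵥ v := by
      rw [hε, div_mul_cancel₀ _ (by linarith : a + 1 ≠ 0)]
    nlinarith [mul_pos hεpos h, mul_pos hεpos hεpos]

/-- For `M` with `zᵀMz ≥ 0`, `S` convex, `F x = M x + q`, and `x₀` a solution
of `VI(S, F)`, the solution set of `VI(S, F)` equals
`{ x ∈ S : (M + Mᵀ)x = c ∧ ∀ y ∈ S, yᵀ(Mx + q) ≥ d + qᵀx }`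
where `c = (M + Mᵀ)x₀` and `d = x₀ᵀMx₀`. -/
theorem VI_solution_set_characterization (n : ℕ) (M : Matrix (Fin n) (Fin n) ℝ)
    (q : Fin n → ℝ) (S : Set (Fin n → ℝ)) (hS : Convex ℝ S)
    (hpsd : ∀ z : Fin n → ℝ, 0 ≤ z ⬝ᵥ M.mulVec z)
    (x₀ : Fin n → ℝ) (hx₀S : x₀ ∈ S)
    (hx₀ : ∀ y ∈ S, 0 ≤ (y - x₀) ⬝ᵥ (M.mulVec x₀ + q))
    (c : Fin n → ℝ) (hc : c = (M + Mᵀ).mulVec x₀)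
    (d : ℝ) (hd : d = x₀ ⬝ᵥ M.mulVec x₀) :
    {x : Fin n → ℝ | x ∈ S ∧ ∀ y ∈ S, 0 ≤ (y - x) ⬝ᵥ (M.mulVec x + q)} =
      {x : Fin n → ℝ | x ∈ S ∧ (M + Mᵀ).mulVec x = c ∧
        ∀ y ∈ S, d + q ⬝ᵥ x ≤ y ⬝ᵥ (M.mulVec x + q)} := by
  have hMT : ∀ u v : Fin n → ℝ, u ⬝ᵥ Mᵀ.mulVec v = v ⬝ᵥ M.mulVec u := by
    intro u v
    rw [Matrix.mulVec_transpose, dotProduct_comm, dotProduct_mulVec]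
  have hA : ∀ u v : Fin n → ℝ, u ⬝ᵥ (M + Mᵀ).mulVec v = v ⬝ᵥ (M + Mᵀ).mulVec u := by
    intro u v
    simp only [Matrix.add_mulVec, dotProduct_add, hMT]
    ring
  have hApsd : ∀ z : Fin n → ℝ, 0 ≤ z ⬝ᵥ (M + Mᵀ).mulVec z := by
    intro z
    simp only [Matrix.add_mulVec, dotProduct_add, hMT]
    have := hpsd z; linarith
  ext x
  simp only [Set.mem_setOf_eq]
  constructor
  · rintro ⟨hxS, hx⟩
    set z := x - x₀ with hz
    have hx_eq : x = x₀ + z := by rw [hz]; abel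
    have h1 : 0 ≤ z ⬝ᵥ (M.mulVec x₀ + q) := hx₀ x hxS
    have h2 : 0 ≤ (-z) ⬝ᵥ (M.mulVec x + q) := by
      have := hx x₀ hx₀S
      rwa [show x₀ - x = -z by rw [hz]; abel] at this
    rw [hx_eq, Matrix.mulVec_add] at h2
    simp only [neg_dotProduct, dotProduct_add] at h1 h2
    have hzMz : z ⬝ᵥ M.mulVec z = 0 := le_antisymm (by linarith) (hpsd z)
    have hAz : (M + Mᵀ).mulVec z = 0 := by
      apply sym_psd_kernel _ hA hApsd
      simp only [Matrix.add_mulVec, dotProduct_add, hMT]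
      linarith
    have h0 : x₀ ⬝ᵥ (M + Mᵀ).mulVec z = 0 := by rw [hAz, dotProduct_zero]
    simp only [Matrix.add_mulVec, dotProduct_add, hMT] at h0
    have hxMx : x ⬝ᵥ M.mulVec x = d := by
      rw [hx_eq, Matrix.mulVec_add]
      simp only [dotProduct_add, add_dotProduct, hd]
      linarith
    refine ⟨hxS, ?_, ?_⟩
    · rw [hc, hx_eq, Matrix.mulVec_add, hAz, add_zero]
    · intro y hy
      have hxy := hx y hy
      simp only [sub_dotProduct, dotProduct_add] at hxy ⊢
      have hq : q ⬝ᵥ x = x ⬝ᵥ q := dotProduct_comm _ _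
      linarith
  · rintro ⟨hxS, hcx, hineq⟩
    set z := x - x₀ with hz
    have hx_eq : x = x₀ + z := by rw [hz]; abel
    have hAz : (M + Mᵀ).mulVec z = 0 := by
      rw [hz, Matrix.mulVec_sub, hcx, hc, sub_self]
    have hzAz : z ⬝ᵥ (M + Mᵀ).mulVec z = 0 := by rw [hAz, dotProduct_zero]
    have h0 : x₀ ⬝ᵥ (M + Mᵀ).mulVec z = 0 := by rw [hAz, dotProduct_zero]
    simp only [Matrix.add_mulVec, dotProduct_add, hMT] at hzAz h0
    have hzMz : z ⬝ᵥ M.mulVec z = 0 := by linarith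
    have hxMx : x ⬝ᵥ M.mulVec x = d := by
      rw [hx_eq, Matrix.mulVec_add]
      simp only [dotProduct_add, add_dotProduct, hd]
      linarith
    refine ⟨hxS, fun y hy => ?_⟩
    have := hineq y hy
    simp only [sub_dotProduct, dotProduct_add] at this ⊢
    have hq : q ⬝ᵥ x = x ⬝ᵥ q := dotProduct_comm _ _
    linarith
end

section
/- (Minty's lemma.) Let S ⊆ ℝⁿ be convex, let F : ℝⁿ → ℝⁿ be continuous and monotone, and let x ∈ S. Then (y − x)ᵀF(x) ≥ 0 for all y ∈ S if and only if (y − x)ᵀF(y) ≥ 0 for all y ∈ S. -/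
open Matrix Filter Topology

/-- Minty's lemma: for `S ⊆ ℝⁿ` convex, `F` continuous and monotone, and
`x ∈ S`, one has `(y − x)ᵀF(x) ≥ 0` for all `y ∈ S` iff
`(y − x)ᵀF(y) ≥ 0` for all `y ∈ S`. -/
theorem minty_lemma (n : ℕ) (S : Set (Fin n → ℝ))
    (F : (Fin n → ℝ) → (Fin n → ℝ)) (hS : Convex ℝ S)
    (hFcont : Continuous F)
    (hFmono : ∀ x y : Fin n → ℝ, 0 ≤ (F x - F y) ⬝ᵥ (x - y))
    (x : Fin n → ℝ) (hx : x ∈ S) :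
    (∀ y ∈ S, 0 ≤ (y - x) ⬝ᵥ F x) ↔ (∀ y ∈ S, 0 ≤ (y - x) ⬝ᵥ F y) := by
  constructor
  · intro h y hy
    have h1 := h y hy
    have h2 := hFmono y x
    have : (F y - F x) ⬝ᵥ (y - x) = (y - x) ⬝ᵥ F y - (y - x) ⬝ᵥ F x := by
      simp [sub_dotProduct, dotProduct_comm]
    linarith [h2, this ▸ h2]
  · intro h y hy
    -- consider z t = x + t • (y - x) for t ∈ (0,1]
    have key : ∀ t : ℝ, t ∈ Set.Ioc (0:ℝ) 1 → 0 ≤ (y - x) ⬝ᵥ F (x + t • (y - x)) := by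
      intro t ht
      have hz : x + t • (y - x) ∈ S := by
        have := hS hx hy (by linarith [ht.2] : (0:ℝ) ≤ 1 - t) ht.1.le (by ring)
        convert this using 1
        module
      have h3 := h _ hz
      have heq : (x + t • (y - x) - x) ⬝ᵥ F (x + t • (y - x))
          = t * ((y - x) ⬝ᵥ F (x + t • (y - x))) := by
        have : x + t • (y - x) - x = t • (y - x) := by module
        rw [this, smul_dotProduct]
        simp
      rw [heq] at h3
      exact nonneg_of_mul_nonneg_right h3 ht.1
    -- take the limit t → 0⁺
    have hcont : Tendsto (fun t : ℝ => (y - x) ⬝ᵥ F (x + t • (y - x)))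
        (nhdsWithin 0 (Set.Ioc 0 1)) (nhds ((y - x) ⬝ᵥ F x)) := by
      have hc : Continuous (fun t : ℝ => (y - x) ⬝ᵥ F (x + t • (y - x))) := by
        unfold dotProduct
        apply continuous_finset_sum
        intro i _
        exact continuous_const.mul ((continuous_apply i).comp (hFcont.comp (by continuity)))
      have := (hc.tendsto 0).mono_left (nhdsWithin_le_nhds (s := Set.Ioc 0 1))
      simpa using this
    haveI : (nhdsWithin (0:ℝ) (Set.Ioc 0 1)).NeBot :=
      mem_closure_iff_nhdsWithin_neBot.mp
        (by rw [closure_Ioc one_ne_zero.symm]; exact ⟨le_refl 0, zero_le_one⟩)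
    exact ge_of_tendsto hcont (Filter.eventually_of_mem self_mem_nhdsWithin key)
end

section
/- Let S ⊆ ℝⁿ be a nonempty, convex and closed set and let F : ℝⁿ → ℝⁿ be continuous and monotone. Then the solution set SOL(S, F) = { x ∈ S : (y − x)ᵀF(x) ≥ 0 for all y ∈ S } is convex and closed; moreover, if S is compact, then SOL(S, F) is compact. -/
open Matrix

lemma dot_cont_right (n : ℕ) (a : Fin n → ℝ) :
    Continuous fun v : Fin n → ℝ => a ⬝ᵥ v := by
  show Continuous fun v : Fin n → ℝ => ∑ i, a i * v i
  exact continuous_finset_sum _ fun i _ => continuous_const.mul (continuous_apply i)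

/-- Minty reformulation of the solution set. -/
lemma VI_minty (n : ℕ) (S : Set (Fin n → ℝ))
    (F : (Fin n → ℝ) → (Fin n → ℝ))
    (hSconv : Convex ℝ S) (hFcont : Continuous F)
    (hFmono : ∀ x y : Fin n → ℝ, 0 ≤ (F x - F y) ⬝ᵥ (x - y)) :
    {x : Fin n → ℝ | x ∈ S ∧ ∀ y ∈ S, 0 ≤ (y - x) ⬝ᵥ F x}
      = S ∩ ⋂ y ∈ S, {x | 0 ≤ (y - x) ⬝ᵥ F y} := by
  ext x
  simp only [Set.mem_setOf_eq, Set.mem_inter_iff, Set.mem_iInter]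
  constructor
  · rintro ⟨hxS, hx⟩
    refine ⟨hxS, fun y hy => ?_⟩
    have h1 := hx y hy
    have h2 := hFmono y x
    have h3 : (F y - F x) ⬝ᵥ (y - x) = (y - x) ⬝ᵥ F y - (y - x) ⬝ᵥ F x := by
      rw [sub_dotProduct, dotProduct_comm (F y), dotProduct_comm (F x)]
    linarith
  · rintro ⟨hxS, hx⟩
    refine ⟨hxS, fun y hy => ?_⟩
    have key : ∀ t ∈ Set.Ioc (0:ℝ) 1, 0 ≤ (y - x) ⬝ᵥ F (x + t • (y - x)) := by
      intro t ht
      have hz : x + t • (y - x) ∈ S := by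
        have := hSconv hxS hy (by linarith [ht.2] : (0:ℝ) ≤ 1 - t) (le_of_lt ht.1)
          (by ring)
        convert this using 1
        module
      have h0 := hx _ hz
      have heq : x + t • (y - x) - x = t • (y - x) := by module
      rw [heq, smul_dotProduct] at h0
      have := (mul_nonneg_iff_of_pos_left ht.1).mp h0
      simpa using this
    have hcont : Continuous fun t : ℝ => (y - x) ⬝ᵥ F (x + t • (y - x)) := by
      exact (dot_cont_right n (y - x)).comp (hFcont.comp (by continuity))
    have htend : Filter.Tendsto (fun t : ℝ => (y - x) ⬝ᵥ F (x + t • (y - x)))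
        (nhdsWithin 0 (Set.Ioi 0)) (nhds ((y - x) ⬝ᵥ F x)) := by
      have := hcont.tendsto 0
      simp only [zero_smul, add_zero] at this
      exact this.mono_left nhdsWithin_le_nhds
    refine ge_of_tendsto htend ?_
    filter_upwards [Ioc_mem_nhdsGT_of_mem (by simp : (0:ℝ) ∈ Set.Ico (0:ℝ) 1)]
      with t ht using key t ht

/-- For `S` nonempty, convex and closed and `F` continuous and monotone,
the solution set `SOL(S, F)` is convex and closed; if moreover `S` is
compact, then `SOL(S, F)` is compact. -/
theorem VI_solution_set_convex_closed_compact (n : ℕ) (S : Set (Fin n → ℝ))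
    (F : (Fin n → ℝ) → (Fin n → ℝ))
    (hSne : S.Nonempty) (hSconv : Convex ℝ S) (hSclosed : IsClosed S)
    (hFcont : Continuous F)
    (hFmono : ∀ x y : Fin n → ℝ, 0 ≤ (F x - F y) ⬝ᵥ (x - y)) :
    Convex ℝ {x : Fin n → ℝ | x ∈ S ∧ ∀ y ∈ S, 0 ≤ (y - x) ⬝ᵥ F x} ∧
    IsClosed {x : Fin n → ℝ | x ∈ S ∧ ∀ y ∈ S, 0 ≤ (y - x) ⬝ᵥ F x} ∧
    (IsCompact S →
      IsCompact {x : Fin n → ℝ | x ∈ S ∧ ∀ y ∈ S, 0 ≤ (y - x) ⬝ᵥ F x}) := by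
  rw [VI_minty n S F hSconv hFcont hFmono]
  have hconv : ∀ y : Fin n → ℝ, Convex ℝ {x : Fin n → ℝ | 0 ≤ (y - x) ⬝ᵥ F y} := by
    intro y
    have : {x : Fin n → ℝ | 0 ≤ (y - x) ⬝ᵥ F y}
        = {x : Fin n → ℝ | x ⬝ᵥ F y ≤ y ⬝ᵥ F y} := by
      ext x; simp [sub_dotProduct, sub_nonneg]
    rw [this]
    exact convex_halfSpace_le
      ⟨fun a b => add_dotProduct a b (F y), fun c a => smul_dotProduct c a (F y)⟩ _
  have hclosed : ∀ y : Fin n → ℝ, IsClosed {x : Fin n → ℝ | 0 ≤ (y - x) ⬝ᵥ F y} := by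
    intro y
    have hc : Continuous fun x : Fin n → ℝ => (y - x) ⬝ᵥ F y := by
      have : (fun x : Fin n → ℝ => (y - x) ⬝ᵥ F y)
          = fun x : Fin n → ℝ => (F y) ⬝ᵥ (y - x) := by
        ext x; rw [dotProduct_comm]
      rw [this]
      exact (dot_cont_right n (F y)).comp (continuous_const.sub continuous_id)
    exact isClosed_le continuous_const hc
  have hC : Convex ℝ (S ∩ ⋂ y ∈ S, {x : Fin n → ℝ | 0 ≤ (y - x) ⬝ᵥ F y}) :=
    hSconv.inter (convex_iInter fun y => convex_iInter fun _ => hconv y)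
  have hCl : IsClosed (S ∩ ⋂ y ∈ S, {x : Fin n → ℝ | 0 ≤ (y - x) ⬝ᵥ F y}) :=
    hSclosed.inter (isClosed_biInter fun y _ => hclosed y)
  exact ⟨hC, hCl, fun hScomp => hScomp.of_isClosed_subset hCl Set.inter_subset_left⟩
end

section
/- Let M ∈ ℝ^{n×n} satisfy zᵀMz ≥ 0 for all z ∈ ℝⁿ, let q ∈ ℝⁿ, let F(x) = Mx + q, and let S, H ⊆ ℝⁿ be closed convex sets. Suppose x₀ is a solution of VI(S, F) with x₀ ∈ H. Then every solution x of VI(S ∩ H, F) satisfies (M + Mᵀ)x = (M + Mᵀ)x₀, and moreover either x is a solution of VI(S, F) or x lies on the topological boundary of S ∩ H. -/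
open Matrix

lemma aux_dot_symm {n : ℕ} (A : Matrix (Fin n) (Fin n) ℝ) (hsymm : Aᵀ = A)
    (u v : Fin n → ℝ) : u ⬝ᵥ A.mulVec v = v ⬝ᵥ A.mulVec u :=
  calc u ⬝ᵥ A.mulVec v = u ⬝ᵥ Aᵀ.mulVec v := by rw [hsymm]
    _ = (v ᵥ* A) ⬝ᵥ u := by rw [mulVec_transpose, dotProduct_comm]
    _ = v ⬝ᵥ A.mulVec u := (dotProduct_mulVec _ _ _).symm

lemma aux_psd_kernel {n : ℕ} (A : Matrix (Fin n) (Fin n) ℝ)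
    (hsymm : Aᵀ = A)
    (hpsd : ∀ w : Fin n → ℝ, 0 ≤ w ⬝ᵥ A.mulVec w)
    (z : Fin n → ℝ) (hz : z ⬝ᵥ A.mulVec z = 0) : A.mulVec z = 0 := by
  rw [← dotProduct_self_eq_zero (v := A.mulVec z)]
  set w : Fin n → ℝ := A.mulVec z with hw
  have key : ∀ t : ℝ, 0 ≤ 2 * t * (w ⬝ᵥ A.mulVec z) + t^2 * (w ⬝ᵥ A.mulVec w) := by
    intro t
    have h := hpsd (z + t • w)
    have hexp : (z + t • w) ⬝ᵥ A.mulVec (z + t • w)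
        = z ⬝ᵥ A.mulVec z + 2 * t * (w ⬝ᵥ A.mulVec z) + t^2 * (w ⬝ᵥ A.mulVec w) := by
      simp only [mulVec_add, mulVec_smul, add_dotProduct, smul_dotProduct,
        dotProduct_add, dotProduct_smul, smul_eq_mul]
      linear_combination t * aux_dot_symm A hsymm z w
    rw [hexp, hz, zero_add] at h
    exact h
  have hb : 0 ≤ w ⬝ᵥ A.mulVec w := hpsd w
  have hc : w ⬝ᵥ A.mulVec z = 0 := by
    by_contra hcne
    set c := w ⬝ᵥ A.mulVec z
    set b := w ⬝ᵥ A.mulVec w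
    have ht := key (-c / (b + 1))
    have hb1 : (0:ℝ) < b + 1 := by linarith
    have heq : 2 * (-c / (b + 1)) * c + (-c / (b + 1))^2 * b
        = (c^2 / (b+1)^2) * (-(b+2)) := by field_simp; ring
    rw [heq] at ht
    nlinarith [div_pos (by positivity : (0:ℝ) < c^2) (by positivity : (0:ℝ) < (b+1)^2)]
  simpa [← hw] using hc

/-- Let `zᵀMz ≥ 0` for all `z`, `F x = M x + q`, `S, H` closed convex, and let
`x₀` solve `VI(S, F)` with `x₀ ∈ H`. Then every solution `x` of `VI(S ∩ H, F)`
satisfies `(M + Mᵀ)x = (M + Mᵀ)x₀`, and moreover either `x` solves `VI(S, F)`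
or `x` lies on the boundary of `S ∩ H`. -/
theorem VI_intersection_solutions (n : ℕ) (M : Matrix (Fin n) (Fin n) ℝ)
    (q : Fin n → ℝ) (S H : Set (Fin n → ℝ))
    (hpsd : ∀ z : Fin n → ℝ, 0 ≤ z ⬝ᵥ M.mulVec z)
    (hSclosed : IsClosed S) (hSconv : Convex ℝ S)
    (hHclosed : IsClosed H) (hHconv : Convex ℝ H)
    (x₀ : Fin n → ℝ) (hx₀S : x₀ ∈ S)
    (hx₀ : ∀ y ∈ S, 0 ≤ (y - x₀) ⬝ᵥ (M.mulVec x₀ + q)) (hx₀H : x₀ ∈ H)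
    (x : Fin n → ℝ) (hxSH : x ∈ S ∩ H)
    (hx : ∀ y ∈ S ∩ H, 0 ≤ (y - x) ⬝ᵥ (M.mulVec x + q)) :
    (M + Mᵀ).mulVec x = (M + Mᵀ).mulVec x₀ ∧
      ((x ∈ S ∧ ∀ y ∈ S, 0 ≤ (y - x) ⬝ᵥ (M.mulVec x + q)) ∨
        x ∈ frontier (S ∩ H)) := by
  have hA : (M + Mᵀ)ᵀ = M + Mᵀ := by rw [transpose_add, transpose_transpose, add_comm]
  have htr : ∀ w : Fin n → ℝ, w ⬝ᵥ Mᵀ.mulVec w = w ⬝ᵥ M.mulVec w := by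
    intro w
    calc w ⬝ᵥ Mᵀ.mulVec w = (w ᵥ* M) ⬝ᵥ w := by rw [mulVec_transpose, dotProduct_comm]
      _ = w ⬝ᵥ M.mulVec w := (dotProduct_mulVec _ _ _).symm
  have hApsd : ∀ w : Fin n → ℝ, 0 ≤ w ⬝ᵥ (M + Mᵀ).mulVec w := by
    intro w
    have h1 := hpsd w
    rw [add_mulVec, dotProduct_add, htr w]
    linarith
  have h1 := hx₀ x hxSH.1
  have h2 := hx x₀ ⟨hx₀S, hx₀H⟩
  set z := x - x₀ with hzdef
  have hMz : z ⬝ᵥ M.mulVec z = 0 := by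
    have hsum : (x - x₀) ⬝ᵥ (M.mulVec x₀ + q) + (x₀ - x) ⬝ᵥ (M.mulVec x + q)
        = -(z ⬝ᵥ M.mulVec z) := by
      simp only [hzdef, mulVec_sub, dotProduct_sub, sub_dotProduct, dotProduct_add]
      ring
    have hzle : z ⬝ᵥ M.mulVec z ≤ 0 := by linarith
    exact le_antisymm hzle (hpsd z)
  have hAz : z ⬝ᵥ (M + Mᵀ).mulVec z = 0 := by
    rw [add_mulVec, dotProduct_add, htr z, hMz]; ring
  have hker : (M + Mᵀ).mulVec z = 0 := aux_psd_kernel _ hA hApsd z hAz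
  have hfirst : (M + Mᵀ).mulVec x = (M + Mᵀ).mulVec x₀ := by
    have h := hker
    rw [hzdef, mulVec_sub, sub_eq_zero] at h
    exact h
  refine ⟨hfirst, ?_⟩
  by_cases hfr : x ∈ frontier (S ∩ H)
  · exact Or.inr hfr
  · left
    have hclosed : IsClosed (S ∩ H) := hSclosed.inter hHclosed
    have hint : x ∈ interior (S ∩ H) := by
      have hcl : x ∈ closure (S ∩ H) := subset_closure hxSH
      rw [frontier, Set.mem_diff, not_and, not_not] at hfr
      exact hfr hcl
    have hFx : M.mulVec x + q = 0 := by
      rcases Metric.isOpen_iff.1 isOpen_interior x hint with ⟨r, hr, hball⟩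
      set F := M.mulVec x + q with hF
      by_contra hne
      have hFnorm : 0 < ‖F‖ := norm_pos_iff.2 hne
      set ε : ℝ := r / (2 * ‖F‖) with hε
      have hεpos : 0 < ε := by positivity
      have hy : x + ε • (-F) ∈ S ∩ H := by
        apply interior_subset
        apply hball
        rw [Metric.mem_ball, dist_eq_norm]
        have heq : x + ε • (-F) - x = ε • (-F) := by abel
        rw [heq, norm_smul, norm_neg, Real.norm_eq_abs, abs_of_pos hεpos, hε]
        rw [div_mul_eq_mul_div, div_lt_iff₀ (by positivity)]
        nlinarith
      have hge := hx _ hy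
      have hdot : (x + ε • (-F) - x) ⬝ᵥ F = -ε * (F ⬝ᵥ F) := by
        have h1 : x + ε • (-F) - x = (-ε) • F := by
          rw [neg_smul, smul_neg]; abel
        rw [h1, smul_dotProduct, smul_eq_mul]
      rw [hdot] at hge
      have hFFnn : 0 ≤ F ⬝ᵥ F := Finset.sum_nonneg fun i _ => mul_self_nonneg _
      have hFF : 0 < F ⬝ᵥ F := by
        rcases lt_or_eq_of_le hFFnn with h | h
        · exact h
        · exact absurd (dotProduct_self_eq_zero.1 h.symm) hne
      nlinarith
    refine ⟨hxSH.1, fun y hy => ?_⟩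
    rw [hFx, dotProduct_zero]
end

section
/- Let M ∈ ℝ^{n×n}, q ∈ ℝⁿ, H ∈ ℝ^{m×n}, h ∈ ℝ^m, and let X := { y ∈ ℝⁿ : Hy ≤ h }. Let x₀ ∈ ℝⁿ and set c := (M + Mᵀ)x₀ and d := x₀ᵀMx₀. Let T ⊆ X and suppose x ∈ T and λ ∈ ℝ^m satisfy: λ ≥ 0 componentwise, Hᵀλ + Mx + q = 0, hᵀλ + qᵀx + d ≤ 0, and (M + Mᵀ)x = c. Then x is a solution of VI(T, F) with F(y) = My + q, i.e., (y − x)ᵀ(Mx + q) ≥ 0 for all y ∈ T. -/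
open Matrix

/-- Dual feasibility certificate for equilibria: if `x ∈ T ⊆ X = {y : Hy ≤ h}`
and `λ ≥ 0` satisfy `Hᵀλ + Mx + q = 0`, `hᵀλ + qᵀx + d ≤ 0` and
`(M + Mᵀ)x = c` (with `c = (M + Mᵀ)x₀`, `d = x₀ᵀMx₀`), then `x` solves
`VI(T, F)` with `F y = M y + q`. -/
theorem VI_solution_from_dual_certificate (n m : ℕ)
    (M : Matrix (Fin n) (Fin n) ℝ) (q : Fin n → ℝ)
    (H : Matrix (Fin m) (Fin n) ℝ) (h : Fin m → ℝ)
    (X : Set (Fin n → ℝ)) (hX : X = {y : Fin n → ℝ | ∀ i, H.mulVec y i ≤ h i})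
    (x₀ : Fin n → ℝ) (c : Fin n → ℝ) (hc : c = (M + Mᵀ).mulVec x₀)
    (d : ℝ) (hd : d = x₀ ⬝ᵥ M.mulVec x₀)
    (T : Set (Fin n → ℝ)) (hTX : T ⊆ X)
    (x : Fin n → ℝ) (hxT : x ∈ T) (lam : Fin m → ℝ)
    (hlam : ∀ i, 0 ≤ lam i)
    (hstat : Hᵀ.mulVec lam + M.mulVec x + q = 0)
    (hineq : h ⬝ᵥ lam + q ⬝ᵥ x + d ≤ 0)
    (hcx : (M + Mᵀ).mulVec x = c) :
    ∀ y ∈ T, 0 ≤ (y - x) ⬝ᵥ (M.mulVec x + q) := by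
  intro y hyT
  have hy : ∀ i, H.mulVec y i ≤ h i := by
    have := hTX hyT
    rw [hX] at this
    exact this
  -- stationarity: Mx + q = -Hᵀλ
  have hstat' : M.mulVec x + q = -(Hᵀ.mulVec lam) := by
    rw [add_assoc] at hstat
    exact eq_neg_of_add_eq_zero_right hstat
  -- helper: for any u v, u ⬝ᵥ Mᵀ.mulVec v = v ⬝ᵥ M.mulVec u
  have hsymm : ∀ u v : Fin n → ℝ, u ⬝ᵥ Mᵀ.mulVec v = v ⬝ᵥ M.mulVec u := by
    intro u v
    rw [mulVec_transpose, dotProduct_comm, dotProduct_mulVec]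
  -- x ⬝ᵥ Mx = d
  have hxMx : x ⬝ᵥ M.mulVec x = d := by
    have h1 : x ⬝ᵥ (M + Mᵀ).mulVec x = 2 * (x ⬝ᵥ M.mulVec x) := by
      rw [add_mulVec, dotProduct_add, hsymm x x]; ring
    have h2 : x₀ ⬝ᵥ (M + Mᵀ).mulVec x₀ = 2 * d := by
      rw [add_mulVec, dotProduct_add, hsymm x₀ x₀, hd]; ring
    have h3 : x ⬝ᵥ (M + Mᵀ).mulVec x₀ = x₀ ⬝ᵥ (M + Mᵀ).mulVec x := by
      rw [add_mulVec, add_mulVec, dotProduct_add, dotProduct_add,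
        hsymm x x₀, hsymm x₀ x]
      ring
    have h4 : x ⬝ᵥ (M + Mᵀ).mulVec x = x₀ ⬝ᵥ (M + Mᵀ).mulVec x₀ := by
      rw [hcx, hc, ← hc, ← hcx] at *
      rw [hcx, hc] at h3 ⊢
      rw [h3, ← hc, hcx, hc]
    linarith [h1, h2, h4]
  -- lam ⬝ᵥ Hy ≤ lam ⬝ᵥ h
  have hlh : lam ⬝ᵥ H.mulVec y ≤ lam ⬝ᵥ h := by
    apply Finset.sum_le_sum
    intro i _
    exact mul_le_mul_of_nonneg_left (hy i) (hlam i)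
  -- rewrite goal
  have e1 : y ⬝ᵥ (M.mulVec x + q) = -(lam ⬝ᵥ H.mulVec y) := by
    rw [hstat', dotProduct_neg, mulVec_transpose, dotProduct_comm,
      ← dotProduct_mulVec, dotProduct_comm]
  have e2 : x ⬝ᵥ (M.mulVec x + q) = d + q ⬝ᵥ x := by
    rw [dotProduct_add, hxMx, dotProduct_comm]
  have e3 : lam ⬝ᵥ h = h ⬝ᵥ lam := dotProduct_comm _ _
  rw [sub_dotProduct, e1, e2]
  linarith [hlh, hineq, e3]
end
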